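/- Let X be a Banach space with a Schauder decomposition (X_n) and associated projections (P_n). For a bounded linear operator A on X, the following are equivalent: (α) A = lim_n A P_n and A = lim_n P_n A in operator norm; (β) A = lim_m lim_n P_m A P_n in operator norm; (γ) A = lim_n lim_m P_m A P_n in operator norm; (δ) A = lim_n P_n A P_n in operator norm. -/

import Mathlib

open Filter Topology

private lemma ptwise_of_norm_tendsto {X : Type*} [NormedAddCommGroup X] [NormedSpace ℂ X]
    {f : ℕ → X →L[ℂ] X} {B : X →L[ℂ] X}
    (h : Tendsto f atTop (𝓝 B)) (x : X) :
    Tendsto (fun n => f n x) atTop (𝓝 (B x)) := by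
  have := ((ContinuousLinearMap.apply ℂ X x).continuous.tendsto B).comp h
  simpa [Function.comp_def] using this

private lemma eq_of_tendsto_of_ptwise {X : Type*} [NormedAddCommGroup X] [NormedSpace ℂ X]
    {f : ℕ → X →L[ℂ] X} {B B' : X →L[ℂ] X}
    (h : Tendsto f atTop (𝓝 B)) (h' : ∀ x, Tendsto (fun n => f n x) atTop (𝓝 (B' x))) :
    B = B' := by
  ext x
  exact tendsto_nhds_unique (ptwise_of_norm_tendsto h x) (h' x)

private lemma left_comp_tendsto {X : Type*} [NormedAddCommGroup X] [NormedSpace ℂ X]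
    (g : X →L[ℂ] X) {f : ℕ → X →L[ℂ] X} {B : X →L[ℂ] X}
    (h : Tendsto f atTop (𝓝 B)) :
    Tendsto (fun n => g.comp (f n)) atTop (𝓝 (g.comp B)) := by
  have := ((ContinuousLinearMap.compL ℂ X X X g).continuous.tendsto B).comp h
  simpa [Function.comp_def] using this

private lemma right_comp_tendsto {X : Type*} [NormedAddCommGroup X] [NormedSpace ℂ X]
    (g : X →L[ℂ] X) {f : ℕ → X →L[ℂ] X} {B : X →L[ℂ] X}
    (h : Tendsto f atTop (𝓝 B)) :
    Tendsto (fun n => (f n).comp g) atTop (𝓝 (B.comp g)) := by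
  have := (((ContinuousLinearMap.compL ℂ X X X).flip g).continuous.tendsto B).comp h
  simpa [Function.comp_def] using this

/-- For a bounded linear operator `A` on a Banach space `X` with a Schauder
decomposition with associated projections `P n`, the four conditions (α)-(δ) describing
horizontal approximability are equivalent. -/
theorem stmt0 (X : Type*) [NormedAddCommGroup X] [NormedSpace ℂ X] [CompleteSpace X]
    (P : ℕ → X →L[ℂ] X)
    (hP_proj : ∀ m n, (P m).comp (P n) = P (min m n))
    (hP_lim : ∀ x : X, Tendsto (fun n => P n x) atTop (𝓝 x))
    (A : X →L[ℂ] X) :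
    List.TFAE
      [ Tendsto (fun n => A.comp (P n)) atTop (𝓝 A) ∧
          Tendsto (fun n => (P n).comp A) atTop (𝓝 A),
        ∃ B : ℕ → X →L[ℂ] X,
          (∀ m, Tendsto (fun n => ((P m).comp A).comp (P n)) atTop (𝓝 (B m))) ∧
            Tendsto B atTop (𝓝 A),
        ∃ B : ℕ → X →L[ℂ] X,
          (∀ n, Tendsto (fun m => ((P m).comp A).comp (P n)) atTop (𝓝 (B n))) ∧
            Tendsto B atTop (𝓝 A),
        Tendsto (fun n => ((P n).comp A).comp (P n)) atTop (𝓝 A) ] := by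
  -- uniform bound on the projections
  obtain ⟨C, hC⟩ : ∃ C, ∀ n, ‖P n‖ ≤ C := by
    apply banach_steinhaus
    intro x
    obtain ⟨M, hM⟩ := (hP_lim x).norm.bddAbove_range
    exact ⟨M, fun n => hM ⟨n, rfl⟩⟩
  have hC0 : (0:ℝ) ≤ C := le_trans (norm_nonneg _) (hC 0)
  tfae_have 1 → 2
  | ⟨h1, h2⟩ => by
    refine ⟨fun m => (P m).comp A, fun m => ?_, h2⟩
    have := left_comp_tendsto (P m) h1
    simpa [ContinuousLinearMap.comp_assoc] using this
  tfae_have 1 → 3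
  | ⟨h1, h2⟩ => ⟨fun n => A.comp (P n), fun n => right_comp_tendsto (P n) h2, h1⟩
  tfae_have 1 → 4
  | ⟨h1, h2⟩ => by
    have h1n := tendsto_iff_norm_sub_tendsto_zero.mp h1
    have h2n := tendsto_iff_norm_sub_tendsto_zero.mp h2
    rw [tendsto_iff_norm_sub_tendsto_zero]
    have hb : ∀ n, ‖((P n).comp A).comp (P n) - A‖ ≤ C * ‖A.comp (P n) - A‖ + ‖(P n).comp A - A‖ := by
      intro n
      have e : ((P n).comp A).comp (P n) - A
          = (P n).comp (A.comp (P n) - A) + ((P n).comp A - A) := by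
        rw [ContinuousLinearMap.comp_sub, ContinuousLinearMap.comp_assoc]
        abel
      rw [e]
      calc ‖(P n).comp (A.comp (P n) - A) + ((P n).comp A - A)‖
          ≤ ‖(P n).comp (A.comp (P n) - A)‖ + ‖(P n).comp A - A‖ := norm_add_le _ _
        _ ≤ ‖P n‖ * ‖A.comp (P n) - A‖ + ‖(P n).comp A - A‖ := by
            gcongr; exact (P n).opNorm_comp_le _
        _ ≤ C * ‖A.comp (P n) - A‖ + ‖(P n).comp A - A‖ := by
            gcongr; exact hC n
    have ht : Tendsto (fun n => C * ‖A.comp (P n) - A‖ + ‖(P n).comp A - A‖) atTop (𝓝 0) := by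
      have := (h1n.const_mul C).add h2n
      simpa using this
    exact squeeze_zero (fun n => norm_nonneg _) hb ht
  tfae_have 4 → 1
  | h4 => by
    constructor
    · rw [Metric.tendsto_atTop]
      intro ε hε
      have hC2 : (0:ℝ) < C + 2 := by linarith
      have hε' : (0:ℝ) < ε / (C + 2) := div_pos hε hC2
      obtain ⟨k, hk⟩ := Metric.tendsto_atTop.mp h4 (ε / (C + 2)) hε'
      refine ⟨k, fun n hn => ?_⟩
      have hQ : ‖((P k).comp A).comp (P k) - A‖ < ε / (C + 2) := by
        have := hk k le_rfl; rwa [dist_eq_norm] at this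
      rw [dist_eq_norm]
      have hQc : (((P k).comp A).comp (P k)).comp (P n) = ((P k).comp A).comp (P k) := by
        rw [ContinuousLinearMap.comp_assoc, hP_proj k n, min_eq_left hn]
      have key : A.comp (P n) - A
          = (A - ((P k).comp A).comp (P k)).comp (P n) + (((P k).comp A).comp (P k) - A) := by
        rw [ContinuousLinearMap.sub_comp, hQc]
        abel
      rw [key]
      have h1 : ‖(A - ((P k).comp A).comp (P k)).comp (P n)‖ ≤ (ε / (C + 2)) * C := by
        calc ‖(A - ((P k).comp A).comp (P k)).comp (P n)‖
            ≤ ‖A - ((P k).comp A).comp (P k)‖ * ‖P n‖ := ContinuousLinearMap.opNorm_comp_le _ _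
          _ ≤ (ε / (C + 2)) * C := by
              apply mul_le_mul (le_of_lt (by rwa [norm_sub_rev] at hQ)) (hC n) (norm_nonneg _)
                hε'.le
      calc ‖(A - ((P k).comp A).comp (P k)).comp (P n) + (((P k).comp A).comp (P k) - A)‖
          ≤ ‖(A - ((P k).comp A).comp (P k)).comp (P n)‖ + ‖((P k).comp A).comp (P k) - A‖ :=
            norm_add_le _ _
        _ < (ε / (C + 2)) * C + ε / (C + 2) := by
            exact add_lt_add_of_le_of_lt h1 hQ
        _ < ε := by
            have : (ε / (C + 2)) * (C + 2) = ε := div_mul_cancel₀ ε (ne_of_gt hC2)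
            nlinarith
    · rw [Metric.tendsto_atTop]
      intro ε hε
      have hC2 : (0:ℝ) < C + 2 := by linarith
      have hε' : (0:ℝ) < ε / (C + 2) := div_pos hε hC2
      obtain ⟨k, hk⟩ := Metric.tendsto_atTop.mp h4 (ε / (C + 2)) hε'
      refine ⟨k, fun n hn => ?_⟩
      have hQ : ‖((P k).comp A).comp (P k) - A‖ < ε / (C + 2) := by
        have := hk k le_rfl; rwa [dist_eq_norm] at this
      rw [dist_eq_norm]
      have hQc : (P n).comp (((P k).comp A).comp (P k)) = ((P k).comp A).comp (P k) := by
        rw [← ContinuousLinearMap.comp_assoc, ← ContinuousLinearMap.comp_assoc, hP_proj n k,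
          min_eq_right hn]
      have key : (P n).comp A - A
          = (P n).comp (A - ((P k).comp A).comp (P k)) + (((P k).comp A).comp (P k) - A) := by
        rw [ContinuousLinearMap.comp_sub, hQc]
        abel
      rw [key]
      have h1 : ‖(P n).comp (A - ((P k).comp A).comp (P k))‖ ≤ C * (ε / (C + 2)) := by
        calc ‖(P n).comp (A - ((P k).comp A).comp (P k))‖
            ≤ ‖P n‖ * ‖A - ((P k).comp A).comp (P k)‖ := ContinuousLinearMap.opNorm_comp_le _ _
          _ ≤ C * (ε / (C + 2)) := by
              apply mul_le_mul (hC n) (le_of_lt (by rwa [norm_sub_rev] at hQ)) (norm_nonneg _) hC0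
      calc ‖(P n).comp (A - ((P k).comp A).comp (P k)) + (((P k).comp A).comp (P k) - A)‖
          ≤ ‖(P n).comp (A - ((P k).comp A).comp (P k))‖ + ‖((P k).comp A).comp (P k) - A‖ :=
            norm_add_le _ _
        _ < C * (ε / (C + 2)) + ε / (C + 2) := add_lt_add_of_le_of_lt h1 hQ
        _ < ε := by
            have : (ε / (C + 2)) * (C + 2) = ε := div_mul_cancel₀ ε (ne_of_gt hC2)
            nlinarith
  tfae_have 2 → 1
  | ⟨B, hB1, hB2⟩ => by
    have hBeq : ∀ m, B m = (P m).comp A := by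
      intro m
      apply eq_of_tendsto_of_ptwise (hB1 m)
      intro x
      have := (((P m).comp A).continuous.tendsto x).comp (hP_lim x)
      simpa [Function.comp_def] using this
    have h2 : Tendsto (fun m => (P m).comp A) atTop (𝓝 A) := by
      have := hB2
      rwa [show B = fun m => (P m).comp A from funext hBeq] at this
    refine ⟨?_, h2⟩
    rw [Metric.tendsto_atTop]
    intro ε hε
    have hC3 : (0:ℝ) < C + 3 := by linarith
    have hε' : (0:ℝ) < ε / (C + 3) := div_pos hε hC3
    obtain ⟨m, hm⟩ := Metric.tendsto_atTop.mp h2 (ε / (C + 3)) hε'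
    have hm' : ‖(P m).comp A - A‖ < ε / (C + 3) := by
      have := hm m le_rfl; rwa [dist_eq_norm] at this
    have hB1' : Tendsto (fun n => ((P m).comp A).comp (P n)) atTop (𝓝 ((P m).comp A)) := by
      have := hB1 m; rwa [hBeq m] at this
    obtain ⟨N, hN⟩ := Metric.tendsto_atTop.mp hB1' (ε / (C + 3)) hε'
    refine ⟨N, fun n hn => ?_⟩
    rw [dist_eq_norm]
    have key : A.comp (P n) - A
        = (A - (P m).comp A).comp (P n) + (((P m).comp A).comp (P n) - (P m).comp A)
          + ((P m).comp A - A) := by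
      rw [ContinuousLinearMap.sub_comp]
      abel
    rw [key]
    have e1 : ‖(A - (P m).comp A).comp (P n)‖ ≤ (ε / (C + 3)) * C := by
      calc ‖(A - (P m).comp A).comp (P n)‖
          ≤ ‖A - (P m).comp A‖ * ‖P n‖ := ContinuousLinearMap.opNorm_comp_le _ _
        _ ≤ (ε / (C + 3)) * C := mul_le_mul (le_of_lt (by rwa [norm_sub_rev] at hm')) (hC n)
            (norm_nonneg _) hε'.le
    have e2 : ‖((P m).comp A).comp (P n) - (P m).comp A‖ < ε / (C + 3) := by
      have := hN n hn; rwa [dist_eq_norm] at this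
    calc ‖(A - (P m).comp A).comp (P n) + (((P m).comp A).comp (P n) - (P m).comp A)
          + ((P m).comp A - A)‖
        ≤ ‖(A - (P m).comp A).comp (P n) + (((P m).comp A).comp (P n) - (P m).comp A)‖
          + ‖(P m).comp A - A‖ := norm_add_le _ _
      _ ≤ ‖(A - (P m).comp A).comp (P n)‖ + ‖((P m).comp A).comp (P n) - (P m).comp A‖
          + ‖(P m).comp A - A‖ := by gcongr; exact norm_add_le _ _
      _ < (ε / (C + 3)) * C + ε / (C + 3) + ε / (C + 3) := by
          apply add_lt_add (add_lt_add_of_le_of_lt e1 e2) hm'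
      _ < ε := by
          have : (ε / (C + 3)) * (C + 3) = ε := div_mul_cancel₀ ε (ne_of_gt hC3)
          nlinarith
  tfae_have 3 → 1
  | ⟨B, hB1, hB2⟩ => by
    have hBeq : ∀ n, B n = A.comp (P n) := by
      intro n
      apply eq_of_tendsto_of_ptwise (hB1 n)
      intro x
      have := hP_lim (A ((P n) x))
      simpa using this
    have h1 : Tendsto (fun n => A.comp (P n)) atTop (𝓝 A) := by
      have := hB2
      rwa [show B = fun n => A.comp (P n) from funext hBeq] at this
    refine ⟨h1, ?_⟩
    rw [Metric.tendsto_atTop]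
    intro ε hε
    have hC3 : (0:ℝ) < C + 3 := by linarith
    have hε' : (0:ℝ) < ε / (C + 3) := div_pos hε hC3
    obtain ⟨k, hk⟩ := Metric.tendsto_atTop.mp h1 (ε / (C + 3)) hε'
    have hk' : ‖A.comp (P k) - A‖ < ε / (C + 3) := by
      have := hk k le_rfl; rwa [dist_eq_norm] at this
    have hB1' : Tendsto (fun m => ((P m).comp A).comp (P k)) atTop (𝓝 (A.comp (P k))) := by
      have := hB1 k; rwa [hBeq k] at this
    obtain ⟨N, hN⟩ := Metric.tendsto_atTop.mp hB1' (ε / (C + 3)) hε'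
    refine ⟨N, fun m hm => ?_⟩
    rw [dist_eq_norm]
    have key : (P m).comp A - A
        = (P m).comp (A - A.comp (P k)) + (((P m).comp A).comp (P k) - A.comp (P k))
          + (A.comp (P k) - A) := by
      rw [ContinuousLinearMap.comp_sub, ContinuousLinearMap.comp_assoc]
      abel
    rw [key]
    have e1 : ‖(P m).comp (A - A.comp (P k))‖ ≤ C * (ε / (C + 3)) := by
      calc ‖(P m).comp (A - A.comp (P k))‖
          ≤ ‖P m‖ * ‖A - A.comp (P k)‖ := ContinuousLinearMap.opNorm_comp_le _ _
        _ ≤ C * (ε / (C + 3)) := mul_le_mul (hC m) (le_of_lt (by rwa [norm_sub_rev] at hk'))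
            (norm_nonneg _) hC0
    have e2 : ‖((P m).comp A).comp (P k) - A.comp (P k)‖ < ε / (C + 3) := by
      have := hN m hm; rwa [dist_eq_norm] at this
    calc ‖(P m).comp (A - A.comp (P k)) + (((P m).comp A).comp (P k) - A.comp (P k))
          + (A.comp (P k) - A)‖
        ≤ ‖(P m).comp (A - A.comp (P k)) + (((P m).comp A).comp (P k) - A.comp (P k))‖
          + ‖A.comp (P k) - A‖ := norm_add_le _ _
      _ ≤ ‖(P m).comp (A - A.comp (P k))‖ + ‖((P m).comp A).comp (P k) - A.comp (P k)‖
          + ‖A.comp (P k) - A‖ := by gcongr; exact norm_add_le _ _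
      _ < C * (ε / (C + 3)) + ε / (C + 3) + ε / (C + 3) := by
          apply add_lt_add (add_lt_add_of_le_of_lt e1 e2) hk'
      _ < ε := by
          have : (ε / (C + 3)) * (C + 3) = ε := div_mul_cancel₀ ε (ne_of_gt hC3)
          nlinarith
  tfae_finish
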